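/- No sequence rule can be both rank-aware and copy-robust. -/
import Mathlib


/-!
Formalization of the ranked-delegation (liquid democracy) setting of
"Liquid Democracy with Ranked Delegations".

Vertices are natural numbers.  An instance carries the vertex set `V`,
the edge set `E`, the distinguished set `C` of casting voters (which have
no outgoing edges), and a rank function such that for every vertex the
ranks of its outgoing edges are exactly `{1, ..., outdeg}`.
-/

namespace RankedDelegation

/-- A ranked delegation instance `(G, r)`. -/
structure Instance where
  V : Finset ℕ
  E : Finset (ℕ × ℕ)
  C : Finset ℕ
  C_sub : C ⊆ V
  edge_mem : ∀ e ∈ E, e.1 ∈ V ∧ e.2 ∈ V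
  C_no_out : ∀ e ∈ E, e.1 ∉ C
  rank : ℕ × ℕ → ℕ
  rank_prop : ∀ v ∈ V,
    (E.filter (fun e => e.1 = v)).image rank =
      Finset.Icc 1 (E.filter (fun e => e.1 = v)).card

/-- A simple path from `v` to a casting voter, represented by its list of
vertices (so it has at least one edge, i.e. at least two vertices). -/
def IsDelegPath (G : Instance) (v : ℕ) (p : List ℕ) : Prop :=
  2 ≤ p.length ∧ p.head? = some v ∧ p.Nodup ∧
  (∀ e ∈ p.zip p.tail, e ∈ G.E) ∧
  (∃ c ∈ G.C, p.getLast? = some c)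

/-- Delegating voters: members of `V` admitting a path to a casting voter.
(Casting voters have no outgoing edges, so they are never `Delegating`.) -/
def Delegating (G : Instance) (v : ℕ) : Prop :=
  v ∈ G.V ∧ ∃ p, IsDelegPath G v p

/-- Isolated voters: neither casting nor delegating. -/
def Isolated (G : Instance) (v : ℕ) : Prop :=
  v ∈ G.V ∧ v ∉ G.C ∧ ¬ Delegating G v

/-- The rank sequence `s(P)` of a path `P`. -/
def seqOf (G : Instance) (p : List ℕ) : List ℕ :=
  (p.zip p.tail).map G.rank

/-- `S_v`, the set of rank sequences of paths from `v` to casting voters. -/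
def Seqs (G : Instance) (v : ℕ) : Set (List ℕ) :=
  {s | ∃ p, IsDelegPath G v p ∧ seqOf G p = s}

/-- Membership in `𝒮`: all entries are positive. -/
def PosSeq (s : List ℕ) : Prop := ∀ x ∈ s, 1 ≤ x

/-- Two sequences are comparable if some instance realizes `S_v = {s, s'}`. -/
def Comparable (s s' : List ℕ) : Prop :=
  ∃ (G : Instance) (v : ℕ), Seqs G v = {s, s'}

/-- A set of sequences is comparable if its elements are pairwise comparable. -/
def ComparableSet (S : Set (List ℕ)) : Prop := S.Pairwise Comparable

/-- `R` restricted to any comparable subset of `𝒮` is a (strict) linear order. -/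
def LinearOnComparable (R : List ℕ → List ℕ → Prop) : Prop :=
  ∀ S : Set (List ℕ), ComparableSet S →
    (∀ s ∈ S, ¬ R s s) ∧
    (∀ s ∈ S, ∀ t ∈ S, ∀ u ∈ S, R s t → R t u → R s u) ∧
    (∀ s ∈ S, ∀ t ∈ S, s ≠ t → R s t ∨ R t s)

/-- `s` is the `R`-maximum (i.e. `R`-best) element of `S`. -/
def IsMaxOf (R : List ℕ → List ℕ → Prop) (S : Set (List ℕ)) (s : List ℕ) : Prop :=
  s ∈ S ∧ ∀ t ∈ S, t ≠ s → R s t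

/-- A delegation rule assigns to every instance and every delegating voter a
path from that voter to a casting voter. -/
structure DelegationRule where
  path : Instance → ℕ → List ℕ
  valid : ∀ G v, Delegating G v → IsDelegPath G v (path G v)

/-- `f` is a sequence rule induced by the relation `R`. -/
def IsSequenceRule (f : DelegationRule) (R : List ℕ → List ℕ → Prop) : Prop :=
  LinearOnComparable R ∧
  ∀ (G : Instance) (v : ℕ), Delegating G v →
    IsMaxOf R (Seqs G v) (seqOf G (f.path G v))

/-- Confluence: in the union of all selected paths, every delegating voter
has outdegree exactly one. -/
def Confluent (f : DelegationRule) : Prop :=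
  ∀ (G : Instance) (v : ℕ), Delegating G v →
    ∃! w : ℕ, ∃ u : ℕ, Delegating G u ∧
      (v, w) ∈ (f.path G u).zip (f.path G u).tail

/-- The (strict) lexicographic order `▷_lex` ("better than"). -/
def lexRel (s s' : List ℕ) : Prop := List.Lex (· < ·) s s'

/-- The order inducing breadth-first delegation: shorter first, ties by lex. -/
def bfdRel (s s' : List ℕ) : Prop :=
  s.length < s'.length ∨ (s.length = s'.length ∧ lexRel s s')

/-- The order inducing MinSum: smaller sum of ranks first, ties by lex. -/
def minSumRel (s s' : List ℕ) : Prop :=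
  s.sum < s'.sum ∨ (s.sum = s'.sum ∧ lexRel s s')

/-- `σ(s)`: the entries of `s` sorted in non-increasing order. -/
def sortDesc (s : List ℕ) : List ℕ := ((s : Multiset ℕ).sort (· ≤ ·)).reverse

/-- The order `▷_σ` inducing Leximax. -/
def leximaxRel (s s' : List ℕ) : Prop :=
  lexRel (sortDesc s) (sortDesc s') ∨ (sortDesc s = sortDesc s' ∧ lexRel s s')

/-- The set `F` of minimum-rank edges with head in `A` and tail outside `A`. -/
def diffF (G : Instance) (A : Finset ℕ) : Finset (ℕ × ℕ) :=
  G.E.filter (fun e => e.2 ∈ A ∧ e.1 ∉ A ∧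
    ∀ e' ∈ G.E, e'.2 ∈ A → e'.1 ∉ A → G.rank e ≤ G.rank e')

/-- The set of assigned voters after `k` rounds of the diffusion process
(initially the casting voters). -/
def diffA (G : Instance) : ℕ → Finset ℕ
  | 0 => G.C
  | k + 1 => diffA G k ∪ (diffF G (diffA G k)).image Prod.fst

/-- `f` is the Diffusion rule: every delegating voter `v` is assigned, at the
round where it acquires a minimum-rank edge `(v, w)` into the assigned set,
the path consisting of `(v, w)` followed by the path of `w`. -/
def IsDiffusion (f : DelegationRule) : Prop :=
  ∀ (G : Instance) (v : ℕ), Delegating G v →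
    ∃ (k : ℕ) (w : ℕ), (v, w) ∈ diffF G (diffA G k) ∧
      ((w ∈ G.C ∧ f.path G v = [v, w]) ∨
       (Delegating G w ∧ f.path G v = v :: f.path G w))

/-- Maximum entry of a sequence (0 for the empty sequence, by convention). -/
def maxR (s : List ℕ) : ℕ := s.foldr max 0

/-- Fuelled version of the diffusion order on sequences without a joint
prefix; the fuel only has to exceed the length of the first argument. -/
def diffRelAux : ℕ → List ℕ → List ℕ → Prop
  | 0, _, _ => False
  | n + 1, s, s' =>
    maxR s < maxR s' ∨
    (maxR s = maxR s' ∧ s.count (maxR s) < s'.count (maxR s')) ∨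
    (maxR s = maxR s' ∧ s.count (maxR s) = s'.count (maxR s') ∧
      (s.takeWhile (fun x => x ≠ maxR s) = [] ∨
        diffRelAux n (s.takeWhile (fun x => x ≠ maxR s))
          (s'.takeWhile (fun x => x ≠ maxR s'))))

/-- The diffusion order `▷_diff` for sequences with no joint prefix. -/
def diffRel0 (s s' : List ℕ) : Prop := diffRelAux (s.length + 1) s s'

/-- Strip the longest common prefix of two sequences. -/
def stripCP : List ℕ → List ℕ → List ℕ × List ℕ
  | a :: s, b :: s' => if a = b then stripCP s s' else (a :: s, b :: s')
  | s, s' => (s, s')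

/-- The diffusion order `▷_diff`. -/
def diffRel (s s' : List ℕ) : Prop :=
  diffRel0 (stripCP s s').1 (stripCP s s').2

/-- The relative voting weight `ω_f(G, r, c)` of a voter `c`. -/
noncomputable def weight (f : DelegationRule) (G : Instance) (c : ℕ) : ℚ :=
  ((Set.ncard {d | Delegating G d ∧ (f.path G d).getLast? = some c} : ℚ) + 1) /
    ((G.C.card : ℚ) + (Set.ncard {d | Delegating G d} : ℚ))

/-- Guru-participation: deleting the outgoing edges of a delegating voter `v`
(keeping the casting voters unchanged) does not decrease the relative weight
of any casting voter other than `v`'s representative. -/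
def GuruParticipation (f : DelegationRule) : Prop :=
  ∀ (G G' : Instance) (v c : ℕ),
    Delegating G v → (f.path G v).getLast? = some c →
    G'.V = G.V → G'.C = G.C → G'.rank = G.rank →
    G'.E = G.E.filter (fun e => e.1 ≠ v) →
    ∀ u ∈ G.C, u ≠ c → weight f G u ≤ weight f G' u

/-- Copy-robustness: if a delegating voter `v` is assigned a path of length
one ending in the casting voter `c`, then turning `v` into a casting voter
(deleting its outgoing edges) preserves the joint weight of `v` and `c`. -/
def CopyRobust (f : DelegationRule) : Prop :=
  ∀ (G G' : Instance) (v c : ℕ),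
    Delegating G v → (f.path G v).length = 2 →
    (f.path G v).getLast? = some c →
    G'.V = G.V → G'.C = insert v G.C → G'.rank = G.rank →
    G'.E = G.E.filter (fun e => e.1 ≠ v) →
    weight f G c = weight f G' c + weight f G' v

/-- A directed cycle through the edge set `B`, given as a nonempty list of
consecutive edges whose last edge returns to the head of the first one. -/
def IsEdgeCycle (B : Finset (ℕ × ℕ)) (l : List (ℕ × ℕ)) : Prop :=
  l ≠ [] ∧ (∀ e ∈ l, e ∈ B) ∧ List.Chain' (fun e e' => e.2 = e'.1) l ∧
  ∃ e₁ e₂, l.head? = some e₁ ∧ l.getLast? = some e₂ ∧ e₂.2 = e₁.1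

def Acyclic (B : Finset (ℕ × ℕ)) : Prop := ¬ ∃ l, IsEdgeCycle B l

/-- Edges of the reduced graph `Ḡ`: edges of `G` between voters of `C ∪ D`. -/
def InReduced (G : Instance) (e : ℕ × ℕ) : Prop :=
  e ∈ G.E ∧ (e.1 ∈ G.C ∨ Delegating G e.1) ∧ (e.2 ∈ G.C ∨ Delegating G e.2)

/-- A `C`-branching in the reduced graph: an acyclic set of reduced edges in
which every delegating voter has outdegree exactly one. -/
def IsCBranching (G : Instance) (B : Finset (ℕ × ℕ)) : Prop :=
  (∀ e ∈ B, InReduced G e) ∧ Acyclic B ∧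
  ∀ v : ℕ, Delegating G v → ∃! w : ℕ, (v, w) ∈ B

/-- The Borda score of a branching: the sum of the ranks of its edges. -/
def score (G : Instance) (B : Finset (ℕ × ℕ)) : ℕ := ∑ e ∈ B, G.rank e

/-- The rank of the (unique) outgoing edge of `v` in `B` (0 if none). -/
def rankOut (G : Instance) (B : Finset (ℕ × ℕ)) (v : ℕ) : ℕ :=
  ∑ e ∈ B.filter (fun e => e.1 = v), G.rank e

/-- Priority-order tie-breaking: `B` is preferred to `B'` if some (delegating)
voter `v₀` gets a strictly smaller rank in `B`, while all delegating voters
with smaller priority get equal ranks in `B` and `B'`. -/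
def PrioPref (G : Instance) (π : ℕ → ℕ) (B B' : Finset (ℕ × ℕ)) : Prop :=
  ∃ v₀ : ℕ, Delegating G v₀ ∧ rankOut G B v₀ < rankOut G B' v₀ ∧
    ∀ v : ℕ, Delegating G v → π v < π v₀ → rankOut G B v = rankOut G B' v

/-- `f` is BordaBranching with priority order `π`: on every instance the
paths of `f` are read off from a rank-sum-minimal `C`-branching which is
moreover preferred (w.r.t. `π`) to every other minimal `C`-branching. -/
def IsBordaBranching (f : DelegationRule) (π : ℕ → ℕ) : Prop :=
  Function.Injective π ∧
  ∀ G : Instance, ∃ B : Finset (ℕ × ℕ), IsCBranching G B ∧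
    (∀ B', IsCBranching G B' → score G B ≤ score G B') ∧
    (∀ B', IsCBranching G B' → score G B' = score G B → B' ≠ B → PrioPref G π B B') ∧
    (∀ v : ℕ, Delegating G v → ∀ e ∈ (f.path G v).zip (f.path G v).tail, e ∈ B)

/-- Weakly lexicographic: on comparable sequences of equal length differing
only in the last entry, `R` agrees with the lexicographic order. -/
def WeaklyLex (R : List ℕ → List ℕ → Prop) : Prop :=
  ∀ (t : List ℕ) (a b : ℕ), Comparable (t ++ [a]) (t ++ [b]) →
    (R (t ++ [a]) (t ++ [b]) ↔ lexRel (t ++ [a]) (t ++ [b]))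

/-- Strongly lexicographic: on comparable sequences of equal length, `R`
agrees with the lexicographic order. -/
def StronglyLex (R : List ℕ → List ℕ → Prop) : Prop :=
  ∀ s s' : List ℕ, Comparable s s' → s.length = s'.length →
    (R s s' ↔ lexRel s s')

/-- Rank-awareness: among comparable sequences, one with a strictly smaller
maximum entry is preferred. -/
def RankAware (R : List ℕ → List ℕ → Prop) : Prop :=
  ∀ s s' : List ℕ, Comparable s s' → maxR s < maxR s' → R s s'

/-- Two sequences have no joint prefix (their heads differ, if any). -/
def NoJointPrefix (s s' : List ℕ) : Prop :=
  ∀ a : ℕ, ¬ (s.head? = some a ∧ s'.head? = some a)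

/-- Truncation: comparisons may be decided on the parts before a dominating
joint entry `x`. -/
def Truncation (R : List ℕ → List ℕ → Prop) : Prop :=
  ∀ s s' t t' : List ℕ, PosSeq s → PosSeq s' → PosSeq t → PosSeq t' →
    Comparable s s' → NoJointPrefix s s' →
    ∀ x : ℕ, 1 ≤ x → maxR t < x → maxR t' < x →
    R (s ++ x :: t) (s' ++ x :: t') → R s s'

/-! ### Auxiliary machinery for the impossibility proof -/

/-- Enumerate all walks with at most `n` vertices from `v` ending at a
casting voter, following the edge list `EL` (casting voters `CL`). -/
def extsL (EL : List (ℕ × ℕ)) (CL : List ℕ) : ℕ → ℕ → List (List ℕ)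
  | 0 => fun _ => []
  | n + 1 => fun v =>
    (if v ∈ CL then [[v]] else []) ++
    ((EL.filter (fun e => e.1 = v)).flatMap
      fun e => (extsL EL CL n e.2).map (fun q => v :: q))

section Machinery

variable {G : Instance} {EL : List (ℕ × ℕ)} {CL : List ℕ}

theorem exts_sound (hE : ∀ e, e ∈ EL ↔ e ∈ G.E) (hC : ∀ c, c ∈ CL ↔ c ∈ G.C) :
    ∀ n v p, p ∈ extsL EL CL n v →
    p.head? = some v ∧ (∀ e ∈ p.zip p.tail, e ∈ G.E) ∧
    ∃ c ∈ G.C, p.getLast? = some c := by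
  intro n
  induction n with
  | zero => intro v p hp; simp [extsL] at hp
  | succ n ih =>
    intro v p hp
    simp only [extsL, List.mem_append] at hp
    rcases hp with hp | hp
    · split_ifs at hp with hv
      · simp only [List.mem_singleton] at hp
        subst hp
        exact ⟨rfl, by simp, v, (hC v).mp hv, rfl⟩
      · simp at hp
    · simp only [List.mem_flatMap, List.mem_map, List.mem_filter,
        decide_eq_true_eq] at hp
      obtain ⟨e, ⟨heE, hev⟩, q, hq, rfl⟩ := hp
      obtain ⟨hh, hedges, c, hc, hl⟩ := ih e.2 q hq
      obtain ⟨w, q', rfl⟩ : ∃ w q', q = w :: q' := by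
        cases q with
        | nil => simp at hh
        | cons a b => exact ⟨a, b, rfl⟩
      simp only [List.head?_cons, Option.some.injEq] at hh
      refine ⟨rfl, ?_, c, hc, ?_⟩
      · intro e' he'
        simp only [List.tail_cons, List.zip_cons_cons, List.mem_cons] at he'
        rcases he' with rfl | he'
        · have : e = (v, w) := by
            cases e
            simp only [Prod.mk.injEq]
            exact ⟨hev, hh.symm⟩
          rw [this] at heE
          exact (hE _).mp heE
        · exact hedges _ he'
      · rw [List.getLast?_cons_cons]; exact hl

theorem exts_complete (hE : ∀ e, e ∈ EL ↔ e ∈ G.E)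
    (hC : ∀ c, c ∈ CL ↔ c ∈ G.C) :
    ∀ n (p : List ℕ) v, p.length ≤ n →
    p.head? = some v → (∀ e ∈ p.zip p.tail, e ∈ G.E) →
    (∃ c ∈ G.C, p.getLast? = some c) → p ∈ extsL EL CL n v := by
  intro n
  induction n with
  | zero =>
    intro p v hlen hh _ _
    cases p with
    | nil => simp at hh
    | cons a q => simp at hlen
  | succ n ih =>
    intro p v hlen hh hedge hlast
    obtain ⟨v', q, rfl⟩ : ∃ v' q, p = v' :: q := by
      cases p with
      | nil => simp at hh
      | cons a b => exact ⟨a, b, rfl⟩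
    simp only [List.head?_cons, Option.some.injEq] at hh
    subst hh
    cases q with
    | nil =>
      obtain ⟨c, hc, hl⟩ := hlast
      simp only [List.getLast?_singleton, Option.some.injEq] at hl
      subst hl
      have hv : v' ∈ CL := (hC v').mpr hc
      simp [extsL, hv]
    | cons w q' =>
      have hvw : (v', w) ∈ G.E := by
        apply hedge
        simp [List.zip_cons_cons]
      have hq : (w :: q') ∈ extsL EL CL n w := by
        apply ih
        · simpa using Nat.le_of_succ_le_succ hlen
        · rfl
        · intro e he
          apply hedge
          simp only [List.tail_cons, List.zip_cons_cons, List.mem_cons]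
          right
          simpa using he
        · obtain ⟨c, hc, hl⟩ := hlast
          exact ⟨c, hc, by rwa [List.getLast?_cons_cons] at hl⟩
      simp only [extsL, List.mem_append, List.mem_flatMap, List.mem_filter,
        List.mem_map, decide_eq_true_eq]
      exact Or.inr ⟨(v', w), ⟨(hE _).mpr hvw, rfl⟩, w :: q', hq, rfl⟩

theorem path_mem_V (G : Instance) : ∀ (p : List ℕ),
    (∀ e ∈ p.zip p.tail, e ∈ G.E) → ∀ x ∈ p, x ∈ G.V ∨ p = [x] := by
  intro p
  induction p with
  | nil => simp
  | cons a q ih =>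
    intro hedge x hx
    cases q with
    | nil =>
      simp only [List.mem_singleton] at hx
      subst hx
      exact Or.inr rfl
    | cons b q' =>
      have hab : (a, b) ∈ G.E := by
        apply hedge
        simp [List.zip_cons_cons]
      have hedge' : ∀ e ∈ (b :: q').zip (b :: q').tail, e ∈ G.E := by
        intro e he
        apply hedge
        simp only [List.tail_cons, List.zip_cons_cons, List.mem_cons]
        right
        simpa using he
      rcases List.mem_cons.mp hx with rfl | hx'
      · exact Or.inl (G.edge_mem _ hab).1
      · rcases ih hedge' x hx' with h | h
        · exact Or.inl h
        · left
          have hb : b = x := by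
            have := congrArg List.head? h
            simpa using this
          subst hb
          exact (G.edge_mem _ hab).2

theorem isDelegPath_iff (hE : ∀ e, e ∈ EL ↔ e ∈ G.E)
    (hC : ∀ c, c ∈ CL ↔ c ∈ G.C) (N v : ℕ) (p : List ℕ)
    (hN : G.V.card ≤ N) :
    IsDelegPath G v p ↔ 2 ≤ p.length ∧ p.Nodup ∧ p ∈ extsL EL CL N v := by
  constructor
  · rintro ⟨hlen, hh, hnd, hedge, hlast⟩
    refine ⟨hlen, hnd, exts_complete hE hC N p v ?_ hh hedge hlast⟩
    have hsub : p.toFinset ⊆ G.V := by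
      intro x hx
      rcases path_mem_V G p hedge x (List.mem_toFinset.mp hx) with h | h
      · exact h
      · rw [h] at hlen; simp at hlen
    calc p.length = p.toFinset.card := (List.toFinset_card_of_nodup hnd).symm
      _ ≤ G.V.card := Finset.card_le_card hsub
      _ ≤ N := hN
  · rintro ⟨hlen, hnd, hmem⟩
    obtain ⟨hh, hedge, hlast⟩ := exts_sound hE hC N v p hmem
    exact ⟨hlen, hh, hnd, hedge, hlast⟩

theorem paths_char (hE : ∀ e, e ∈ EL ↔ e ∈ G.E)
    (hC : ∀ c, c ∈ CL ↔ c ∈ G.C) (v : ℕ) (L : List (List ℕ))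
    (hN : G.V.card ≤ 9)
    (h1 : ∀ p ∈ extsL EL CL 9 v, 2 ≤ p.length → p.Nodup → p ∈ L)
    (h2 : ∀ p ∈ L, 2 ≤ p.length ∧ p.Nodup ∧ p ∈ extsL EL CL 9 v) :
    ∀ p, IsDelegPath G v p ↔ p ∈ L := by
  intro p
  rw [isDelegPath_iff hE hC 9 v p hN]
  constructor
  · rintro ⟨a, b, c⟩; exact h1 p c a b
  · intro hp; exact h2 p hp

theorem delegating_iff (hE : ∀ e, e ∈ EL ↔ e ∈ G.E)
    (hC : ∀ c, c ∈ CL ↔ c ∈ G.C) (hN : G.V.card ≤ 9) (d : ℕ) :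
    Delegating G d ↔
      d ∈ G.V ∧ ∃ p ∈ extsL EL CL 9 d, 2 ≤ p.length ∧ p.Nodup := by
  constructor
  · rintro ⟨hV, p, hp⟩
    rw [isDelegPath_iff hE hC 9 d p hN] at hp
    exact ⟨hV, p, hp.2.2, hp.1, hp.2.1⟩
  · rintro ⟨hV, p, hm, hl, hn⟩
    exact ⟨hV, p, (isDelegPath_iff hE hC 9 d p hN).mpr ⟨hl, hn, hm⟩⟩

theorem seqs_pair {v : ℕ} {p1 p2 : List ℕ} {s1 s2 : List ℕ}
    (h : ∀ p, IsDelegPath G v p ↔ p ∈ [p1, p2])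
    (e1 : seqOf G p1 = s1) (e2 : seqOf G p2 = s2) :
    Seqs G v = {s1, s2} := by
  ext s
  simp only [Seqs, Set.mem_setOf_eq, Set.mem_insert_iff, Set.mem_singleton_iff]
  constructor
  · rintro ⟨p, hp, rfl⟩
    rcases List.mem_pair.mp ((h p).mp hp) with rfl | rfl
    · exact Or.inl e1
    · exact Or.inr e2
  · rintro (rfl | rfl)
    · exact ⟨p1, (h p1).mpr (by simp), e1⟩
    · exact ⟨p2, (h p2).mpr (by simp), e2⟩

theorem seqs_single {v : ℕ} {p1 : List ℕ} {s1 : List ℕ}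
    (h : ∀ p, IsDelegPath G v p ↔ p ∈ [p1]) (e1 : seqOf G p1 = s1) :
    Seqs G v = {s1} := by
  ext s
  simp only [Seqs, Set.mem_setOf_eq, Set.mem_singleton_iff]
  constructor
  · rintro ⟨p, hp, rfl⟩
    have := (h p).mp hp
    simp only [List.mem_singleton] at this
    subst this
    exact e1
  · rintro rfl
    exact ⟨p1, (h p1).mpr (by simp), e1⟩

end Machinery

theorem R_asymm {R : List ℕ → List ℕ → Prop} (hLin : LinearOnComparable R)
    {s t : List ℕ} (hc : Comparable s t) (h1 : R s t) (h2 : R t s) : False := by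
  by_cases hne : s = t
  · subst hne
    obtain ⟨hirr, -, -⟩ := hLin {s} (by
      intro a ha b hb hab
      simp only [Set.mem_singleton_iff] at ha hb
      subst ha; subst hb; exact absurd rfl hab)
    exact hirr s rfl h1
  · have hcs : ComparableSet {s, t} := by
      intro a ha b hb hab
      simp only [Set.mem_insert_iff, Set.mem_singleton_iff] at ha hb
      rcases ha with rfl | rfl <;> rcases hb with rfl | rfl
      · exact absurd rfl hab
      · exact hc
      · obtain ⟨G, v, h⟩ := hc
        exact ⟨G, v, h.trans (Set.pair_comm _ _)⟩
      · exact absurd rfl hab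
    obtain ⟨hirr, htr, -⟩ := hLin {s, t} hcs
    have hs : s ∈ ({s, t} : Set (List ℕ)) := Or.inl rfl
    have ht : t ∈ ({s, t} : Set (List ℕ)) := Or.inr rfl
    exact hirr s hs (htr s hs t ht s hs h1 h2)

theorem choose_pair {R : List ℕ → List ℕ → Prop} {G : Instance} {v : ℕ}
    {w s1 s2 : List ℕ} (hLin : LinearOnComparable R)
    (hm : IsMaxOf R (Seqs G v) w)
    (hS : Seqs G v = {s1, s2}) (hR : R s1 s2) (hne : s1 ≠ s2) :
    w = s1 := by
  have hmem := hm.1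
  rw [hS] at hmem
  simp only [Set.mem_insert_iff, Set.mem_singleton_iff] at hmem
  rcases hmem with h | h
  · exact h
  · exfalso
    have h2 : R w s1 := hm.2 s1 (by rw [hS]; exact Or.inl rfl)
      (by rw [h]; exact hne)
    rw [h] at h2
    exact R_asymm hLin ⟨G, v, hS⟩ hR h2

theorem path_det_pair {G : Instance} {v : ℕ} {p p1 p2 s1 : List ℕ}
    (hpaths : ∀ q, IsDelegPath G v q ↔ q ∈ [p1, p2])
    (hvalid : IsDelegPath G v p) (hs : seqOf G p = s1)
    (e2 : seqOf G p2 ≠ s1) : p = p1 := by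
  rcases List.mem_pair.mp ((hpaths _).mp hvalid) with h | h
  · exact h
  · rw [h] at hs; exact absurd hs e2

theorem path_det_single {G : Instance} {v : ℕ} {p p1 : List ℕ}
    (hpaths : ∀ q, IsDelegPath G v q ↔ q ∈ [p1])
    (hvalid : IsDelegPath G v p) : p = p1 := by
  have := (hpaths _).mp hvalid
  simpa using this

theorem weight_eq (f : DelegationRule) (G : Instance) (c : ℕ) (D A : Finset ℕ)
    (hD : ∀ d, Delegating G d ↔ d ∈ D)
    (hA : ∀ d, (Delegating G d ∧ (f.path G d).getLast? = some c) ↔ d ∈ A) :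
    weight f G c = ((A.card : ℚ) + 1) / ((G.C.card : ℚ) + (D.card : ℚ)) := by
  unfold weight
  rw [show {d | Delegating G d ∧ (f.path G d).getLast? = some c} = ↑A by
    ext d; simpa using hA d]
  rw [show {d | Delegating G d} = ↑D by ext d; simpa using hD d]
  rw [Set.ncard_coe_finset, Set.ncard_coe_finset]

/-- The main instance: casting voters 1, 2; delegating voters 3, 4, 5;
isolated voters 6, 7, 8, 9. -/
def rk : ℕ × ℕ → ℕ := fun e =>
  if e = (3, 4) then 1 else if e = (3, 1) then 2
  else if e = (4, 6) then 1 else if e = (4, 7) then 2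
  else if e = (4, 2) then 3
  else if e = (5, 8) then 1 else if e = (5, 9) then 2
  else if e = (5, 3) then 3 else 0

def Gm : Instance where
  V := {1, 2, 3, 4, 5, 6, 7, 8, 9}
  E := {(3, 4), (3, 1), (4, 6), (4, 7), (4, 2), (5, 8), (5, 9), (5, 3)}
  C := {1, 2}
  C_sub := by decide
  edge_mem := by decide
  C_no_out := by decide
  rank := rk
  rank_prop := by decide

def GD : Instance where
  V := {1, 2, 3, 4, 5, 6, 7, 8, 9}
  E := {(4, 6), (4, 7), (4, 2), (5, 8), (5, 9), (5, 3)}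
  C := {1, 2, 3}
  C_sub := by decide
  edge_mem := by decide
  C_no_out := by decide
  rank := rk
  rank_prop := by decide

def GE : Instance where
  V := {1, 2, 3, 4, 5, 6, 7, 8, 9}
  E := {(3, 4), (3, 1), (5, 8), (5, 9), (5, 3)}
  C := {1, 2, 4}
  C_sub := by decide
  edge_mem := by decide
  C_no_out := by decide
  rank := rk
  rank_prop := by decide

def EmL : List (ℕ × ℕ) := [(3,4),(3,1),(4,6),(4,7),(4,2),(5,8),(5,9),(5,3)]
def EDL : List (ℕ × ℕ) := [(4,6),(4,7),(4,2),(5,8),(5,9),(5,3)]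
def EEL : List (ℕ × ℕ) := [(3,4),(3,1),(5,8),(5,9),(5,3)]

theorem hEm : ∀ e, e ∈ EmL ↔ e ∈ Gm.E := by
  have h : Gm.E = EmL.toFinset := by decide
  intro e; rw [h, List.mem_toFinset]
theorem hCm : ∀ c, c ∈ [1, 2] ↔ c ∈ Gm.C := by
  have h : Gm.C = ([1,2] : List ℕ).toFinset := by decide
  intro c; rw [h, List.mem_toFinset]
theorem hED : ∀ e, e ∈ EDL ↔ e ∈ GD.E := by
  have h : GD.E = EDL.toFinset := by decide
  intro e; rw [h, List.mem_toFinset]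
theorem hCD : ∀ c, c ∈ [1, 2, 3] ↔ c ∈ GD.C := by
  have h : GD.C = ([1,2,3] : List ℕ).toFinset := by decide
  intro c; rw [h, List.mem_toFinset]
theorem hEE : ∀ e, e ∈ EEL ↔ e ∈ GE.E := by
  have h : GE.E = EEL.toFinset := by decide
  intro e; rw [h, List.mem_toFinset]
theorem hCE : ∀ c, c ∈ [1, 2, 4] ↔ c ∈ GE.C := by
  have h : GE.C = ([1,2,4] : List ℕ).toFinset := by decide
  intro c; rw [h, List.mem_toFinset]

theorem path_det_pair' {G : Instance} {v : ℕ} {p p1 p2 s1 : List ℕ}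
    (hpaths : ∀ q, IsDelegPath G v q ↔ q ∈ [p1, p2])
    (hvalid : IsDelegPath G v p) (hs : seqOf G p = s1)
    (e1 : seqOf G p1 ≠ s1) : p = p2 := by
  rcases List.mem_pair.mp ((hpaths _).mp hvalid) with h | h
  · rw [h] at hs; exact absurd hs e1
  · exact h

theorem PGm3 : ∀ p, IsDelegPath Gm 3 p ↔ p ∈ [[3,4,2],[3,1]] :=
  paths_char hEm hCm 3 _ (by decide) (by decide) (by decide)
theorem PGm4 : ∀ p, IsDelegPath Gm 4 p ↔ p ∈ [[4,2]] :=
  paths_char hEm hCm 4 _ (by decide) (by decide) (by decide)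
theorem PGm5 : ∀ p, IsDelegPath Gm 5 p ↔ p ∈ [[5,3,4,2],[5,3,1]] :=
  paths_char hEm hCm 5 _ (by decide) (by decide) (by decide)
theorem PGD4 : ∀ p, IsDelegPath GD 4 p ↔ p ∈ [[4,2]] :=
  paths_char hED hCD 4 _ (by decide) (by decide) (by decide)
theorem PGD5 : ∀ p, IsDelegPath GD 5 p ↔ p ∈ [[5,3]] :=
  paths_char hED hCD 5 _ (by decide) (by decide) (by decide)
theorem PGE3 : ∀ p, IsDelegPath GE 3 p ↔ p ∈ [[3,4],[3,1]] :=
  paths_char hEE hCE 3 _ (by decide) (by decide) (by decide)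
theorem PGE5 : ∀ p, IsDelegPath GE 5 p ↔ p ∈ [[5,3,4],[5,3,1]] :=
  paths_char hEE hCE 5 _ (by decide) (by decide) (by decide)

theorem SGm3 : Seqs Gm 3 = {[1,3],[2]} := seqs_pair PGm3 (by decide) (by decide)
theorem SGm5 : Seqs Gm 5 = {[3,1,3],[3,2]} :=
  seqs_pair PGm5 (by decide) (by decide)
theorem SGE3 : Seqs GE 3 = {[1],[2]} := seqs_pair PGE3 (by decide) (by decide)
theorem SGE5 : Seqs GE 5 = {[3,1],[3,2]} :=
  seqs_pair PGE5 (by decide) (by decide)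

theorem delGm : ∀ d, Delegating Gm d ↔ (d = 3 ∨ d = 4 ∨ d = 5) := by
  intro d
  rw [delegating_iff hEm hCm (by decide) d]
  constructor
  · rintro ⟨hV, hp⟩
    have hV' : d ∈ ({1,2,3,4,5,6,7,8,9} : Finset ℕ) := hV
    fin_cases hV' <;> simp_all <;> revert hp <;> decide
  · rintro (rfl | rfl | rfl) <;> exact ⟨by decide, by decide⟩

theorem delGD : ∀ d, Delegating GD d ↔ (d = 4 ∨ d = 5) := by
  intro d
  rw [delegating_iff hED hCD (by decide) d]
  constructor
  · rintro ⟨hV, hp⟩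
    have hV' : d ∈ ({1,2,3,4,5,6,7,8,9} : Finset ℕ) := hV
    fin_cases hV' <;> simp_all <;> revert hp <;> decide
  · rintro (rfl | rfl) <;> exact ⟨by decide, by decide⟩

theorem delGE : ∀ d, Delegating GE d ↔ (d = 3 ∨ d = 5) := by
  intro d
  rw [delegating_iff hEE hCE (by decide) d]
  constructor
  · rintro ⟨hV, hp⟩
    have hV' : d ∈ ({1,2,3,4,5,6,7,8,9} : Finset ℕ) := hV
    fin_cases hV' <;> simp_all <;> revert hp <;> decide
  · rintro (rfl | rfl) <;> exact ⟨by decide, by decide⟩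

/-- no sequence rule is both rank-aware and copy-robust. -/
theorem no_rank_aware_copy_robust (f : DelegationRule)
    (R : List ℕ → List ℕ → Prop) (hf : IsSequenceRule f R) :
    ¬ (RankAware R ∧ CopyRobust f) := by
  rintro ⟨hRA, hCR⟩
  obtain ⟨hLin, hMax⟩ := hf
  have del3 : Delegating Gm 3 := (delGm 3).mpr (Or.inl rfl)
  have del4 : Delegating Gm 4 := (delGm 4).mpr (Or.inr (Or.inl rfl))
  have del5 : Delegating Gm 5 := (delGm 5).mpr (Or.inr (Or.inr rfl))
  have delE3 : Delegating GE 3 := (delGE 3).mpr (Or.inl rfl)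
  have delE5 : Delegating GE 5 := (delGE 5).mpr (Or.inr rfl)
  have delD4 : Delegating GD 4 := (delGD 4).mpr (Or.inl rfl)
  have delD5 : Delegating GD 5 := (delGD 5).mpr (Or.inr rfl)
  have hc2 : Gm.C.card = 2 := by decide
  have delGm' : ∀ d, Delegating Gm d ↔ d ∈ ({3,4,5} : Finset ℕ) :=
    fun d => (delGm d).trans (by simp)
  have delGD' : ∀ d, Delegating GD d ↔ d ∈ ({4,5} : Finset ℕ) :=
    fun d => (delGD d).trans (by simp)
  have delGE' : ∀ d, Delegating GE d ↔ d ∈ ({3,5} : Finset ℕ) :=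
    fun d => (delGE d).trans (by simp)
  have hcD : GD.C.card = 3 := by decide
  have hcE : GE.C.card = 3 := by decide
  -- voter 3 in Gm chooses the direct rank-2 edge (rank-awareness)
  have hR3 : R [2] [1,3] :=
    hRA [2] [1,3] ⟨Gm, 3, SGm3.trans (Set.pair_comm _ _)⟩ (by decide)
  have hseq3 : seqOf Gm (f.path Gm 3) = [2] :=
    choose_pair hLin (hMax Gm 3 del3) (SGm3.trans (Set.pair_comm _ _)) hR3
      (by decide)
  have hpath3 : f.path Gm 3 = [3,1] :=
    path_det_pair' PGm3 (f.valid Gm 3 del3) hseq3 (by decide)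
  -- voter 4 in Gm
  have hpath4 : f.path Gm 4 = [4,2] := path_det_single PGm4 (f.valid Gm 4 del4)
  -- voter 3 in GE chooses its rank-1 edge (rank-awareness)
  have hRE3 : R [1] [2] := hRA [1] [2] ⟨GE, 3, SGE3⟩ (by decide)
  have hseqE3 : seqOf GE (f.path GE 3) = [1] :=
    choose_pair hLin (hMax GE 3 delE3) SGE3 hRE3 (by decide)
  have hpathE3 : f.path GE 3 = [3,4] :=
    path_det_pair PGE3 (f.valid GE 3 delE3) hseqE3 (by decide)
  -- copy-robustness at pivot 4
  have hEq4 : weight f Gm 2 = weight f GE 2 + weight f GE 4 :=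
    hCR Gm GE 4 2 del4 (by rw [hpath4]; rfl) (by rw [hpath4]; decide) rfl
      (by decide) rfl (by decide)
  -- derive R [3,1,3] [3,2]
  have hW : R [3,1,3] [3,2] := by
    have hmem5 := (hMax Gm 5 del5).1
    rw [SGm5] at hmem5
    simp only [Set.mem_insert_iff, Set.mem_singleton_iff] at hmem5
    rcases hmem5 with h5 | h5
    · have := (hMax Gm 5 del5).2 [3,2] (by rw [SGm5]; exact Or.inr rfl)
        (by rw [h5]; decide)
      rwa [h5] at this
    · exfalso
      have hpath5 : f.path Gm 5 = [5,3,1] :=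
        path_det_pair' PGm5 (f.valid Gm 5 del5) h5 (by decide)
      have wGm2 : weight f Gm 2 = 2/5 := by
        rw [weight_eq f Gm 2 {3,4,5} {4} delGm' ?_, hc2,
          show (({3,4,5} : Finset ℕ).card) = 3 by decide,
          show (({4} : Finset ℕ).card) = 1 by decide]
        · norm_num
        · intro d
          constructor
          · rintro ⟨hdel, hlast⟩
            rcases (delGm d).mp hdel with rfl | rfl | rfl
            · rw [hpath3] at hlast; exact absurd hlast (by decide)
            · simp
            · rw [hpath5] at hlast; exact absurd hlast (by decide)
          · intro hd
            simp only [Finset.mem_singleton] at hd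
            subst hd
            exact ⟨del4, by rw [hpath4]; decide⟩
      have wGE2 : weight f GE 2 = 1/5 := by
        rw [weight_eq f GE 2 {3,5} ∅ delGE' ?_, hcE,
          show (({3,5} : Finset ℕ).card) = 2 by decide,
          show ((∅ : Finset ℕ).card) = 0 by decide]
        · norm_num
        · intro d
          constructor
          · rintro ⟨hdel, hlast⟩
            exfalso
            rcases (delGE d).mp hdel with rfl | rfl
            · rw [hpathE3] at hlast; exact absurd hlast (by decide)
            · rcases List.mem_pair.mp ((PGE5 _).mp (f.valid GE 5 delE5))
                with h | h <;> rw [h] at hlast <;> exact absurd hlast (by decide)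
          · intro hd; exact absurd hd (Finset.notMem_empty d)
      have hmemE5 := (hMax GE 5 delE5).1
      rw [SGE5] at hmemE5
      simp only [Set.mem_insert_iff, Set.mem_singleton_iff] at hmemE5
      rcases hmemE5 with hE5 | hE5
      · have hpE5 : f.path GE 5 = [5,3,4] :=
          path_det_pair PGE5 (f.valid GE 5 delE5) hE5 (by decide)
        have wGE4 : weight f GE 4 = 3/5 := by
          rw [weight_eq f GE 4 {3,5} {3,5} delGE' ?_, hcE,
            show (({3,5} : Finset ℕ).card) = 2 by decide]
          · norm_num
          · intro d
            constructor
            · rintro ⟨hdel, -⟩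
              rcases (delGE d).mp hdel with rfl | rfl
              · decide
              · decide
            · intro hd
              simp only [Finset.mem_insert, Finset.mem_singleton] at hd
              rcases hd with rfl | rfl
              · exact ⟨delE3, by rw [hpathE3]; decide⟩
              · exact ⟨delE5, by rw [hpE5]; decide⟩
        rw [wGm2, wGE2, wGE4] at hEq4
        norm_num at hEq4
      · have hpE5 : f.path GE 5 = [5,3,1] :=
          path_det_pair' PGE5 (f.valid GE 5 delE5) hE5 (by decide)
        have wGE4 : weight f GE 4 = 2/5 := by
          rw [weight_eq f GE 4 {3,5} {3} delGE' ?_, hcE,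
            show (({3,5} : Finset ℕ).card) = 2 by decide,
            show (({3} : Finset ℕ).card) = 1 by decide]
          · norm_num
          · intro d
            constructor
            · rintro ⟨hdel, hlast⟩
              rcases (delGE d).mp hdel with rfl | rfl
              · decide
              · rw [hpE5] at hlast; exact absurd hlast (by decide)
            · intro hd
              simp only [Finset.mem_singleton] at hd
              subst hd
              exact ⟨delE3, by rw [hpathE3]; decide⟩
        rw [wGm2, wGE2, wGE4] at hEq4
        norm_num at hEq4
  -- hence voter 5 in Gm chooses the path through 3 and 4 to voter 2
  have hseq5 : seqOf Gm (f.path Gm 5) = [3,1,3] :=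
    choose_pair hLin (hMax Gm 5 del5) SGm5 hW (by decide)
  have hpath5 : f.path Gm 5 = [5,3,4,2] :=
    path_det_pair PGm5 (f.valid Gm 5 del5) hseq5 (by decide)
  -- copy-robustness at pivot 3
  have hpD4 : f.path GD 4 = [4,2] := path_det_single PGD4 (f.valid GD 4 delD4)
  have hpD5 : f.path GD 5 = [5,3] := path_det_single PGD5 (f.valid GD 5 delD5)
  have hEq3 : weight f Gm 1 = weight f GD 1 + weight f GD 3 :=
    hCR Gm GD 3 1 del3 (by rw [hpath3]; rfl) (by rw [hpath3]; decide) rfl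
      (by decide) rfl (by decide)
  have wGm1 : weight f Gm 1 = 2/5 := by
    rw [weight_eq f Gm 1 {3,4,5} {3} delGm' ?_, hc2,
      show (({3,4,5} : Finset ℕ).card) = 3 by decide,
      show (({3} : Finset ℕ).card) = 1 by decide]
    · norm_num
    · intro d
      constructor
      · rintro ⟨hdel, hlast⟩
        rcases (delGm d).mp hdel with rfl | rfl | rfl
        · decide
        · rw [hpath4] at hlast; exact absurd hlast (by decide)
        · rw [hpath5] at hlast; exact absurd hlast (by decide)
      · intro hd
        simp only [Finset.mem_singleton] at hd
        subst hd
        exact ⟨del3, by rw [hpath3]; decide⟩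
  have wGD1 : weight f GD 1 = 1/5 := by
    rw [weight_eq f GD 1 {4,5} ∅ delGD' ?_, hcD,
      show (({4,5} : Finset ℕ).card) = 2 by decide,
      show ((∅ : Finset ℕ).card) = 0 by decide]
    · norm_num
    · intro d
      constructor
      · rintro ⟨hdel, hlast⟩
        exfalso
        rcases (delGD d).mp hdel with rfl | rfl
        · rw [hpD4] at hlast; exact absurd hlast (by decide)
        · rw [hpD5] at hlast; exact absurd hlast (by decide)
      · intro hd; exact absurd hd (Finset.notMem_empty d)
  have wGD3 : weight f GD 3 = 2/5 := by
    rw [weight_eq f GD 3 {4,5} {5} delGD' ?_, hcD,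
      show (({4,5} : Finset ℕ).card) = 2 by decide,
      show (({5} : Finset ℕ).card) = 1 by decide]
    · norm_num
    · intro d
      constructor
      · rintro ⟨hdel, hlast⟩
        rcases (delGD d).mp hdel with rfl | rfl
        · rw [hpD4] at hlast; exact absurd hlast (by decide)
        · decide
      · intro hd
        simp only [Finset.mem_singleton] at hd
        subst hd
        exact ⟨delD5, by rw [hpD5]; decide⟩
  rw [wGm1, wGD1, wGD3] at hEq3
  norm_num at hEq3


end RankedDelegation
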